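/- arXiv:2102.11653 — 2 statements merged into one kernel-verified Lean document; each statement's English description precedes it below -/
import Mathlib

section
/- Let K be a field, P ∈ K[X] an irreducible polynomial, A := K[X]/(P), and g a finite-dimensional Lie algebra over K carrying a nondegenerate invariant symmetric bilinear form B. Let φ : A → K be a nonzero K-linear map. Equip A ⊗_K g with its Lie bracket determined by ⁅a₁ ⊗ x, a₂ ⊗ y⁆ = (a₁a₂) ⊗ ⁅x,y⁆. Then the K-bilinear form B_φ on A ⊗_K g determined by B_φ(a₁ ⊗ x, a₂ ⊗ y) = φ(a₁a₂)·B(x,y) is a nondegenerate invariant symmetric bilinear form on the K-Lie algebra A ⊗_K g. -/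
open TensorProduct

set_option maxHeartbeats 1000000 in
/-- For `A = K[X]/(P)` with `P` irreducible, a finite-dimensional Lie algebra `g`
with a NIS `B`, and a nonzero linear map `φ : A → K`, the bilinear form on
`A ⊗ g` determined by `B_φ(a₁ ⊗ x, a₂ ⊗ y) = φ(a₁a₂)·B(x,y)` is a NIS. -/
theorem tensor_form_is_nis
    {K : Type*} [Field K] (P : Polynomial K) (hP : Irreducible P)
    {g : Type*} [LieRing g] [LieAlgebra K g] [FiniteDimensional K g]
    (B : g →ₗ[K] g →ₗ[K] K)
    (hsymm : ∀ x y : g, B x y = B y x)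
    (hinv : ∀ x y z : g, B ⁅x, z⁆ y = B x ⁅z, y⁆)
    (hnd : ∀ x : g, (∀ y : g, B x y = 0) → x = 0)
    (φ : (Polynomial K ⧸ Ideal.span {P}) →ₗ[K] K) (hφ : φ ≠ 0)
    (C : ((Polynomial K ⧸ Ideal.span {P}) ⊗[K] g) →ₗ[K]
      ((Polynomial K ⧸ Ideal.span {P}) ⊗[K] g) →ₗ[K] K)
    (hC : ∀ (a₁ a₂ : Polynomial K ⧸ Ideal.span {P}) (x y : g),
      C (a₁ ⊗ₜ[K] x) (a₂ ⊗ₜ[K] y) = φ (a₁ * a₂) * B x y) :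
    (∀ u v : (Polynomial K ⧸ Ideal.span {P}) ⊗[K] g, C u v = C v u) ∧
    (∀ u v w : (Polynomial K ⧸ Ideal.span {P}) ⊗[K] g, C ⁅u, w⁆ v = C u ⁅w, v⁆) ∧
    (∀ u : (Polynomial K ⧸ Ideal.span {P}) ⊗[K] g,
      (∀ v : (Polynomial K ⧸ Ideal.span {P}) ⊗[K] g, C u v = 0) → u = 0) := by
  classical
  set A : Type _ := Polynomial K ⧸ Ideal.span {P} with hAdef
  -- A is a field
  haveI hmax : (Ideal.span {P}).IsMaximal :=
    PrincipalIdealRing.isMaximal_of_irreducible hP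
  have hfield : IsField A :=
    (Ideal.Quotient.maximal_ideal_iff_isField_quotient _).mp hmax
  -- nondegeneracy of the pairing (a, b) ↦ φ (a * b)
  have hφnd : ∀ a : A, (∀ b : A, φ (a * b) = 0) → a = 0 := by
    intro a ha
    by_contra h
    obtain ⟨c, hc⟩ := DFunLike.ne_iff.mp hφ
    obtain ⟨a', ha'⟩ := hfield.mul_inv_cancel h
    have := ha (a' * c)
    rw [← mul_assoc, ha', one_mul] at this
    exact hc this
  have hzl : ∀ w : A ⊗[K] g, ⁅(0 : A ⊗[K] g), w⁆ = 0 :=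
    fun w => zero_lie (L := A ⊗[K] g) w
  have hzr : ∀ w : A ⊗[K] g, ⁅w, (0 : A ⊗[K] g)⁆ = 0 :=
    fun w => lie_zero (M := A ⊗[K] g) w
  have hal : ∀ u v w : A ⊗[K] g, ⁅u + v, w⁆ = ⁅u, w⁆ + ⁅v, w⁆ :=
    fun u v w => add_lie (L := A ⊗[K] g) u v w
  have har : ∀ u v w : A ⊗[K] g, ⁅u, v + w⁆ = ⁅u, v⁆ + ⁅u, w⁆ :=
    fun u v w => lie_add (L := A ⊗[K] g) u v w
  refine ⟨?_, ?_, ?_⟩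
  · -- symmetry
    intro u v
    induction u using TensorProduct.induction_on with
    | zero => simp
    | tmul a x =>
      induction v using TensorProduct.induction_on with
      | zero => simp
      | tmul b y => rw [hC, hC, hsymm x y, mul_comm a b]
      | add v₁ v₂ h₁ h₂ => simp only [map_add, LinearMap.add_apply, h₁, h₂]
    | add u₁ u₂ h₁ h₂ => simp only [map_add, LinearMap.add_apply, h₁, h₂]
  · -- invariance
    intro u v w
    induction u using TensorProduct.induction_on with
    | zero => simp only [hzl, map_zero, LinearMap.zero_apply]
    | tmul a x =>
      induction w using TensorProduct.induction_on with
      | zero => simp only [hzl, hzr, map_zero, LinearMap.zero_apply]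
      | tmul c z =>
        induction v using TensorProduct.induction_on with
        | zero => simp only [hzr, map_zero, LinearMap.zero_apply]
        | tmul b y =>
          rw [LieAlgebra.ExtendScalars.bracket_tmul,
            LieAlgebra.ExtendScalars.bracket_tmul, hC, hC, hinv,
            mul_assoc]
        | add v₁ v₂ h₁ h₂ =>
          simp only [har, map_add, LinearMap.add_apply, h₁, h₂]
      | add w₁ w₂ h₁ h₂ =>
        simp only [hal, har, map_add, LinearMap.add_apply, h₁, h₂]
    | add u₁ u₂ h₁ h₂ =>
      simp only [hal, map_add, LinearMap.add_apply, h₁, h₂]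
  · -- nondegeneracy
    intro u hu
    set bg : Module.Basis (Fin (Module.finrank K g)) K g := Module.finBasis K g with hbg
    -- coordinate extraction maps
    set L : Fin (Module.finrank K g) → (A ⊗[K] g →ₗ[K] A) := fun j =>
      (TensorProduct.rid K A).toLinearMap ∘ₗ LinearMap.lTensor A (bg.coord j)
      with hL
    have hLtmul : ∀ (j) (a : A) (x : g), L j (a ⊗ₜ[K] x) = bg.repr x j • a := by
      intro j a x
      simp [hL, TensorProduct.rid_tmul, Module.Basis.coord_apply]
    -- representation of u
    have hrep : ∀ w : A ⊗[K] g, w = ∑ j, (L j w) ⊗ₜ[K] bg j := by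
      intro w
      induction w using TensorProduct.induction_on with
      | zero => simp
      | tmul a x =>
        simp only [hLtmul]
        calc a ⊗ₜ[K] x = a ⊗ₜ[K] (∑ j, bg.repr x j • bg j) := by
              rw [Module.Basis.sum_repr]
          _ = ∑ j, (bg.repr x j • a) ⊗ₜ[K] bg j := by
              rw [TensorProduct.tmul_sum]
              exact Finset.sum_congr rfl fun j _ =>
                (TensorProduct.smul_tmul _ _ _).symm
      | add w₁ w₂ h₁ h₂ =>
        conv_lhs => rw [h₁, h₂]
        simp [← Finset.sum_add_distrib, TensorProduct.add_tmul]
    -- compute C u (b ⊗ y)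
    have key : ∀ (b : A) (y : g), B (∑ j, φ (L j u * b) • bg j) y = 0 := by
      intro b y
      have h1 : C u (b ⊗ₜ[K] y) = 0 := hu _
      conv_lhs at h1 => rw [hrep u]
      rw [map_sum, LinearMap.sum_apply] at h1
      rw [map_sum, LinearMap.sum_apply]
      rw [← h1]
      refine Finset.sum_congr rfl fun j _ => ?_
      rw [hC, map_smul, LinearMap.smul_apply, smul_eq_mul]
    have hFzero : ∀ b : A, ∑ j, φ (L j u * b) • bg j = 0 := by
      intro b
      exact hnd _ (key b)
    have hcoeff : ∀ j (b : A), φ (L j u * b) = 0 := by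
      intro j b
      have := Fintype.linearIndependent_iff.mp bg.linearIndependent
        (fun j => φ (L j u * b)) (hFzero b)
      exact this j
    have hLzero : ∀ j, L j u = 0 := fun j => hφnd _ (hcoeff j)
    rw [hrep u]
    simp [hLzero]
end

section
/- Let K be a field, P ∈ K[X] an irreducible polynomial of degree d, A := K[X]/(P), and g a nonzero finite-dimensional Lie algebra over K carrying a nonzero symmetric invariant bilinear form B. Equip A ⊗_K g with its Lie bracket determined by ⁅a₁ ⊗ x, a₂ ⊗ y⁆ = (a₁a₂) ⊗ ⁅x,y⁆. Then the K-vector space of symmetric invariant K-bilinear forms on A ⊗_K g has dimension at least d. -/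
open TensorProduct

/-- The space of symmetric invariant `K`-bilinear forms on a Lie ring `L` which is
also a `K`-vector space. -/
def symInvForms (K : Type*) [Field K] (L : Type*) [LieRing L]
    [Module K L] : Submodule K (L →ₗ[K] L →ₗ[K] K) where
  carrier := {B | (∀ x y : L, B x y = B y x) ∧
    ∀ x y z : L, B ⁅x, z⁆ y = B x ⁅z, y⁆}
  add_mem' := by
    rintro B C ⟨hB1, hB2⟩ ⟨hC1, hC2⟩
    refine ⟨fun x y => ?_, fun x y z => ?_⟩
    · simp [hB1 x y, hC1 x y]
    · simp [hB2 x y z, hC2 x y z]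
  zero_mem' := ⟨fun x y => by simp, fun x y z => by simp⟩
  smul_mem' := by
    rintro c B ⟨hB1, hB2⟩
    refine ⟨fun x y => ?_, fun x y z => ?_⟩
    · simp [hB1 x y]
    · simp [hB2 x y z]

noncomputable def auxF (K : Type*) [Field K] (A : Type*) [CommRing A] [Algebra K A]
    {g : Type*} [LieRing g] [LieAlgebra K g]
    (B : g →ₗ[K] g →ₗ[K] K) : (A →ₗ[K] K) →ₗ[K] ((A ⊗[K] g) →ₗ[K] (A ⊗[K] g) →ₗ[K] K) where
  toFun φ := LinearMap.BilinForm.tensorDistrib K K (((LinearMap.mul K A).compr₂ φ) ⊗ₜ[K] B)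
  map_add' φ ψ := by
    have h : (LinearMap.mul K A).compr₂ (φ + ψ)
        = (LinearMap.mul K A).compr₂ φ + (LinearMap.mul K A).compr₂ ψ := by
      ext; simp
    rw [h, add_tmul, map_add]
  map_smul' c φ := by
    have h : (LinearMap.mul K A).compr₂ (c • φ) = c • (LinearMap.mul K A).compr₂ φ := by
      ext; simp
    rw [h, ← smul_tmul', map_smul]
    rfl

theorem auxF_tmul (K : Type*) [Field K] (A : Type*) [CommRing A] [Algebra K A]
    {g : Type*} [LieRing g] [LieAlgebra K g]
    (B : g →ₗ[K] g →ₗ[K] K) (φ : A →ₗ[K] K) (a b : A) (x y : g) :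
    auxF K A B φ (a ⊗ₜ x) (b ⊗ₜ y) = φ (a * b) * B x y := by
  simp [auxF, LinearMap.BilinForm.tensorDistrib_tmul, mul_comm]

theorem auxF_mem (K : Type*) [Field K] (A : Type*) [CommRing A] [Algebra K A]
    {g : Type*} [LieRing g] [LieAlgebra K g]
    (B : g →ₗ[K] g →ₗ[K] K)
    (hsymm : ∀ x y : g, B x y = B y x)
    (hinv : ∀ x y z : g, B ⁅x, z⁆ y = B x ⁅z, y⁆)
    (φ : A →ₗ[K] K) : auxF K A B φ ∈ symInvForms K (A ⊗[K] g) := by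
  set F := auxF K A B φ with hF
  constructor
  · intro u v
    induction u using TensorProduct.induction_on with
    | zero => simp
    | tmul a x =>
      induction v using TensorProduct.induction_on with
      | zero => simp
      | tmul b y => rw [auxF_tmul, auxF_tmul, mul_comm b a, hsymm]
      | add v₁ v₂ h1 h2 => simp [map_add, h1, h2]
    | add u₁ u₂ h1 h2 => simp [map_add, h1, h2]
  · intro u v w
    induction u using TensorProduct.induction_on with
    | zero => simp
    | tmul a x =>
      induction v using TensorProduct.induction_on with
      | zero => simp
      | tmul b y =>
        induction w using TensorProduct.induction_on with
        | zero => simp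
        | tmul c z =>
          rw [LieAlgebra.ExtendScalars.bracket_tmul, LieAlgebra.ExtendScalars.bracket_tmul,
            auxF_tmul, auxF_tmul, hinv]
          ring_nf
        | add w₁ w₂ h1 h2 => simp only [add_lie, lie_add, map_add, LinearMap.add_apply, h1, h2]
      | add v₁ v₂ h1 h2 => simp only [lie_add, map_add, LinearMap.add_apply, h1, h2]
    | add u₁ u₂ h1 h2 => simp only [add_lie, map_add, LinearMap.add_apply, h1, h2]

set_option maxHeartbeats 1000000 in
set_option synthInstance.maxHeartbeats 1000000 in
/-- For `A = K[X]/(P)` with `P` irreducible of degree `d` and a nonzero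
finite-dimensional Lie algebra `g` carrying a nonzero symmetric invariant form,
the space of symmetric invariant forms on `A ⊗ g` has dimension at least `d`. -/
theorem rank_symInvForms_ge_degree
    {K : Type*} [Field K] (P : Polynomial K) (hP : Irreducible P)
    {g : Type*} [LieRing g] [LieAlgebra K g] [FiniteDimensional K g] [Nontrivial g]
    (B : g →ₗ[K] g →ₗ[K] K) (hB : B ≠ 0)
    (hsymm : ∀ x y : g, B x y = B y x)
    (hinv : ∀ x y z : g, B ⁅x, z⁆ y = B x ⁅z, y⁆) :
    (P.natDegree : Cardinal) ≤
      Module.rank K (symInvForms K ((Polynomial K ⧸ Ideal.span {P}) ⊗[K] g)) := by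
  have bA : Module.Basis (Fin P.natDegree) K (Polynomial K ⧸ Ideal.span {P}) :=
    AdjoinRoot.powerBasisAux hP.ne_zero
  obtain ⟨x, hx⟩ := DFunLike.ne_iff.mp hB
  obtain ⟨y, hy⟩ := DFunLike.ne_iff.mp hx
  have hinj : Function.Injective (auxF K (Polynomial K ⧸ Ideal.span {P}) (g := g) B) := by
    rw [injective_iff_map_eq_zero]
    intro φ hφ
    refine LinearMap.ext fun a => ?_
    have h := congrFun (congrArg DFunLike.coe
      (congrFun (congrArg DFunLike.coe hφ) (a ⊗ₜ x))) (1 ⊗ₜ y)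
    rw [auxF_tmul, mul_one] at h
    simpa using mul_eq_zero.mp h |>.resolve_right hy
  let G := (auxF K (Polynomial K ⧸ Ideal.span {P}) (g := g) B).codRestrict
    (symInvForms K ((Polynomial K ⧸ Ideal.span {P}) ⊗[K] g))
    (auxF_mem K (Polynomial K ⧸ Ideal.span {P}) B hsymm hinv)
  have hGinj : Function.Injective G := fun φ ψ h => hinj (congrArg Subtype.val h)
  have h := LinearMap.lift_rank_le_of_injective G hGinj
  rw [rank_eq_card_basis bA.dualBasis] at h
  simpa [Cardinal.lift_id'] using h
end
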